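/- arXiv:2303.04683 — 3 statements merged into one kernel-verified Lean document; each statement's English description precedes it below -/
import Mathlib

section
/- If f : ℝ → ℝ is concave and nondecreasing on (0,∞), and r(p,B) = B * log2(1 + g*p/(σ²*B)) with g, σ² > 0, then the composition (p,B) ↦ f(r(p,B) - r_e) is jointly concave on the set where B > 0, p ≥ 0, and r(p,B) > r_e, for any constant r_e ≥ 0. -/
private lemma combo_pos {a b B1 B2 : ℝ} (ha : 0 ≤ a) (hb : 0 ≤ b) (hab : a + b = 1)
    (h1 : 0 < B1) (h2 : 0 < B2) : 0 < a * B1 + b * B2 := by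
  rcases ha.lt_or_eq with h | h
  · exact add_pos_of_pos_of_nonneg (mul_pos h h1) (mul_nonneg hb h2.le)
  · have hb1 : b = 1 := by linarith
    rw [← h, hb1]; simpa using h2

private lemma h_concave {g σ2 : ℝ} (hg : 0 < g) (hσ : 0 < σ2) :
    ConcaveOn ℝ (Set.Ici 0) (fun x => Real.logb 2 (1 + g * x / σ2)) := by
  have hlog : ConcaveOn ℝ (Set.Ioi 0) Real.log := strictConcaveOn_log_Ioi.concaveOn
  refine ⟨convex_Ici 0, ?_⟩
  intro x hx y hy a b ha hb hab
  have hx' : (0:ℝ) ≤ x := hx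
  have hy' : (0:ℝ) ≤ y := hy
  have h1 : (0:ℝ) < 1 + g * x / σ2 := by positivity
  have h2 : (0:ℝ) < 1 + g * y / σ2 := by positivity
  have key := hlog.2 (Set.mem_Ioi.2 h1) (Set.mem_Ioi.2 h2) ha hb hab
  simp only [smul_eq_mul] at key ⊢
  have harg : a * (1 + g * x / σ2) + b * (1 + g * y / σ2)
      = 1 + g * (a * x + b * y) / σ2 := by field_simp; ring_nf; nlinarith [hab]
  rw [harg] at key
  have hlog2 : (0:ℝ) < Real.log 2 := Real.log_pos (by norm_num)
  simp only [Real.logb]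
  calc a * (Real.log (1 + g * x / σ2) / Real.log 2) + b * (Real.log (1 + g * y / σ2) / Real.log 2)
      = (a * Real.log (1 + g * x / σ2) + b * Real.log (1 + g * y / σ2)) / Real.log 2 := by ring
    _ ≤ Real.log (1 + g * (a * x + b * y) / σ2) / Real.log 2 :=
        div_le_div_of_nonneg_right key hlog2.le |>.trans_eq rfl
    _ = Real.log (1 + g * (a * x + b * y) / σ2) / Real.log 2 := rfl

private lemma persp {g σ2 : ℝ} (hg : 0 < g) (hσ : 0 < σ2)
    {p1 B1 p2 B2 a b : ℝ} (hp1 : 0 ≤ p1) (hB1 : 0 < B1) (hp2 : 0 ≤ p2) (hB2 : 0 < B2)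
    (ha : 0 ≤ a) (hb : 0 ≤ b) (hab : a + b = 1) :
    a * (B1 * Real.logb 2 (1 + g * p1 / (σ2 * B1)))
      + b * (B2 * Real.logb 2 (1 + g * p2 / (σ2 * B2)))
      ≤ (a * B1 + b * B2) * Real.logb 2 (1 + g * (a * p1 + b * p2) / (σ2 * (a * B1 + b * B2))) := by
  set B := a * B1 + b * B2 with hBdef
  have hB : 0 < B := combo_pos ha hb hab hB1 hB2
  have hc := h_concave hg hσ
  have hu1 : p1 / B1 ∈ Set.Ici (0:ℝ) := Set.mem_Ici.2 (div_nonneg hp1 hB1.le)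
  have hu2 : p2 / B2 ∈ Set.Ici (0:ℝ) := Set.mem_Ici.2 (div_nonneg hp2 hB2.le)
  have hw1 : 0 ≤ a * B1 / B := by positivity
  have hw2 : 0 ≤ b * B2 / B := by positivity
  have hsum : a * B1 / B + b * B2 / B = 1 := by field_simp; exact hBdef.symm
  have key := hc.2 hu1 hu2 hw1 hw2 hsum
  simp only [smul_eq_mul] at key
  have harg : a * B1 / B * (p1 / B1) + b * B2 / B * (p2 / B2) = (a * p1 + b * p2) / B := by
    field_simp
  rw [harg] at key
  have e1 : g * (p1 / B1) / σ2 = g * p1 / (σ2 * B1) := by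
    rw [← mul_div_assoc, div_div, mul_comm B1 σ2]
  have e2 : g * (p2 / B2) / σ2 = g * p2 / (σ2 * B2) := by
    rw [← mul_div_assoc, div_div, mul_comm B2 σ2]
  have e3 : g * ((a * p1 + b * p2) / B) / σ2 = g * (a * p1 + b * p2) / (σ2 * B) := by
    rw [← mul_div_assoc, div_div, mul_comm B σ2]
  rw [e1, e2, e3] at key
  have := mul_le_mul_of_nonneg_left key hB.le
  calc a * (B1 * Real.logb 2 (1 + g * p1 / (σ2 * B1)))
      + b * (B2 * Real.logb 2 (1 + g * p2 / (σ2 * B2)))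
      = B * (a * B1 / B * Real.logb 2 (1 + g * p1 / (σ2 * B1))
          + b * B2 / B * Real.logb 2 (1 + g * p2 / (σ2 * B2))) := by
        field_simp
    _ ≤ B * Real.logb 2 (1 + g * (a * p1 + b * p2) / (σ2 * B)) := this
    _ = (a * B1 + b * B2) * Real.logb 2 (1 + g * (a * p1 + b * p2) / (σ2 * (a * B1 + b * B2))) := by
        rw [hBdef]

/-- If f is concave and nondecreasing on (0,∞), then (p,B) ↦ f(r(p,B) - r_e)
is jointly concave on {B > 0, p ≥ 0, r(p,B) > r_e}. -/
theorem stmt_1 (g σ2 re : ℝ) (hg : 0 < g) (hσ : 0 < σ2) (hre : 0 ≤ re)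
    (f : ℝ → ℝ)
    (hconc : ConcaveOn ℝ (Set.Ioi 0) f)
    (hmono : MonotoneOn f (Set.Ioi 0)) :
    ConcaveOn ℝ
      {pb : ℝ × ℝ | 0 < pb.2 ∧ 0 ≤ pb.1 ∧
        re < pb.2 * Real.logb 2 (1 + g * pb.1 / (σ2 * pb.2))}
      (fun pb => f (pb.2 * Real.logb 2 (1 + g * pb.1 / (σ2 * pb.2)) - re)) := by
  set r : ℝ × ℝ → ℝ := fun pb => pb.2 * Real.logb 2 (1 + g * pb.1 / (σ2 * pb.2)) with hr
  have main : ∀ x ∈ {pb : ℝ × ℝ | 0 < pb.2 ∧ 0 ≤ pb.1 ∧ re < r pb},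
      ∀ y ∈ {pb : ℝ × ℝ | 0 < pb.2 ∧ 0 ≤ pb.1 ∧ re < r pb},
      ∀ a b : ℝ, 0 ≤ a → 0 ≤ b → a + b = 1 →
        a * r x + b * r y ≤ r (a • x + b • y) ∧ re < a * r x + b * r y := by
    intro x hx y hy a b ha hb hab
    obtain ⟨hB1, hp1, hrx⟩ := hx
    obtain ⟨hB2, hp2, hry⟩ := hy
    have hcombo : (a • x + b • y).1 = a * x.1 + b * y.1 ∧ (a • x + b • y).2 = a * x.2 + b * y.2 := by
      simp [Prod.smul_def, smul_eq_mul]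
    constructor
    · rw [hr]
      simp only [hcombo.1, hcombo.2]
      exact persp hg hσ hp1 hB1 hp2 hB2 ha hb hab
    · have := combo_pos ha hb hab (sub_pos.2 hrx) (sub_pos.2 hry)
      nlinarith [this]
  constructor
  · intro x hx y hy a b ha hb hab
    obtain ⟨hkey, hre'⟩ := main x hx y hy a b ha hb hab
    obtain ⟨hB1, hp1, _⟩ := hx
    obtain ⟨hB2, hp2, _⟩ := hy
    refine ⟨?_, ?_, lt_of_lt_of_le hre' hkey⟩
    · have : (a • x + b • y).2 = a * x.2 + b * y.2 := by simp [Prod.smul_def, smul_eq_mul]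
      rw [this]; exact combo_pos ha hb hab hB1 hB2
    · have : (a • x + b • y).1 = a * x.1 + b * y.1 := by simp [Prod.smul_def, smul_eq_mul]
      rw [this]
      exact add_nonneg (mul_nonneg ha hp1) (mul_nonneg hb hp2)
  · intro x hx y hy a b ha hb hab
    obtain ⟨hkey, hre'⟩ := main x hx y hy a b ha hb hab
    obtain ⟨hB1, hp1, hrx⟩ := hx
    obtain ⟨hB2, hp2, hry⟩ := hy
    have h1 : r x - re ∈ Set.Ioi (0:ℝ) := Set.mem_Ioi.2 (sub_pos.2 hrx)
    have h2 : r y - re ∈ Set.Ioi (0:ℝ) := Set.mem_Ioi.2 (sub_pos.2 hry)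
    have step1 := hconc.2 h1 h2 ha hb hab
    simp only [smul_eq_mul] at step1 ⊢
    have e : a * (r x - re) + b * (r y - re) = a * r x + b * r y - re := by
      have : a * re + b * re = re := by nlinarith [hab]
      ring_nf; linarith [this]
    rw [e] at step1
    have hmid : a * r x + b * r y - re ∈ Set.Ioi (0:ℝ) := Set.mem_Ioi.2 (by linarith)
    have htop : r (a • x + b • y) - re ∈ Set.Ioi (0:ℝ) :=
      Set.mem_Ioi.2 (by linarith)
    have step2 := hmono hmid htop (by linarith)
    exact step1.trans step2
end

section
/- Let N : ℝ → ℝ be nonnegative, concave, and differentiable on a convex open set S ⊆ ℝⁿ, and let D : S → ℝ be positive, convex, and differentiable. Then the ratio φ(x) = N(x)/D(x) is pseudoconcave on S: for all x₁, x₂ ∈ S, if φ(x₁) < φ(x₂) then ∇φ(x₁) · (x₂ - x₁) > 0. -/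
/-- For a convex function differentiable at `x`, the directional derivative along a
chord is at most the secant increment. -/
lemma convexOn_fderiv_le {E : Type*} [NormedAddCommGroup E] [NormedSpace ℝ E]
    {S : Set E} {D : E → ℝ} (hD : ConvexOn ℝ S D)
    {x y : E} (hx : x ∈ S) (hy : y ∈ S) (hd : DifferentiableAt ℝ D x) :
    fderiv ℝ D x (y - x) ≤ D y - D x := by
  set v := y - x with hv
  have hc : HasDerivAt (fun t : ℝ => x + t • v) v 0 := by
    simpa using ((hasDerivAt_id (0:ℝ)).smul_const v).const_add x
  have hg : HasDerivAt (fun t : ℝ => D (x + t • v)) (fderiv ℝ D x v) 0 := by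
    have hx0 : HasFDerivAt D (fderiv ℝ D x) ((0:ℝ) • v + x) := by
      simpa using hd.hasFDerivAt
    have := HasFDerivAt.comp_hasDerivAt 0 (by simpa using hd.hasFDerivAt) hc
    exact this
  have htend := hasDerivAt_iff_tendsto_slope.mp hg
  have htend' : Filter.Tendsto (slope (fun t : ℝ => D (x + t • v)) 0)
      (nhdsWithin 0 (Set.Ioi 0)) (nhds (fderiv ℝ D x v)) :=
    htend.mono_left (nhdsWithin_mono _ (by intro t ht; exact ne_of_gt ht))
  refine le_of_tendsto htend' ?_
  filter_upwards [Ioo_mem_nhdsGT_of_mem (Set.mem_Ico.mpr ⟨le_refl (0:ℝ), one_pos⟩)]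
    with t ht
  obtain ⟨ht0, ht1⟩ := ht
  have hval : D (x + t • v) ≤ (1 - t) * D x + t * D y := by
    have h := hD.2 hx hy (by linarith : (0:ℝ) ≤ 1 - t) (le_of_lt ht0) (by ring)
    have : (1 - t) • x + t • y = x + t • v := by
      simp only [hv, smul_sub]; module
    rw [this] at h
    simpa using h
  have hslope : slope (fun t : ℝ => D (x + t • v)) 0 t
      = (D (x + t • v) - D x) / t := by
    simp [slope_def_field, div_eq_inv_mul]
  rw [hslope, div_le_iff₀ ht0]
  nlinarith [hval]

/-- A nonnegative concave differentiable numerator over a positive convex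
differentiable denominator is pseudoconcave on a convex open set. -/
theorem stmt_2 {n : ℕ} (S : Set (EuclideanSpace ℝ (Fin n)))
    (hS : Convex ℝ S) (hSopen : IsOpen S)
    (N D : EuclideanSpace ℝ (Fin n) → ℝ)
    (hN0 : ∀ x ∈ S, 0 ≤ N x) (hNconc : ConcaveOn ℝ S N)
    (hNdiff : ∀ x ∈ S, DifferentiableAt ℝ N x)
    (hD0 : ∀ x ∈ S, 0 < D x) (hDconv : ConvexOn ℝ S D)
    (hDdiff : ∀ x ∈ S, DifferentiableAt ℝ D x) :
    ∀ x₁ ∈ S, ∀ x₂ ∈ S, N x₁ / D x₁ < N x₂ / D x₂ →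
      0 < fderiv ℝ (fun x => N x / D x) x₁ (x₂ - x₁) := by
  intro x₁ hx₁ x₂ hx₂ hlt
  have hN1 := hNdiff x₁ hx₁
  have hD1 := hDdiff x₁ hx₁
  have hD1pos := hD0 x₁ hx₁
  have hD2pos := hD0 x₂ hx₂
  set v := x₂ - x₁ with hv
  set a := fderiv ℝ N x₁ v with ha
  set b := fderiv ℝ D x₁ v with hb
  -- b ≤ D x₂ - D x₁
  have hbineq : b ≤ D x₂ - D x₁ := convexOn_fderiv_le hDconv hx₁ hx₂ hD1
  -- a ≥ N x₂ - N x₁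
  have haineq : N x₂ - N x₁ ≤ a := by
    have hneg : ConvexOn ℝ S (fun x => -N x) := hNconc.neg
    have hdneg : DifferentiableAt ℝ (fun x => -N x) x₁ := hN1.neg
    have h := convexOn_fderiv_le hneg hx₁ hx₂ hdneg
    have : fderiv ℝ (fun x => -N x) x₁ = -(fderiv ℝ N x₁) := by
      simpa using fderiv_neg (f := N) (x := x₁)
    rw [this] at h
    simp only [ContinuousLinearMap.neg_apply] at h
    linarith
  -- compute the directional derivative via the 1-D quotient rule
  have hc : HasDerivAt (fun t : ℝ => x₁ + t • v) v 0 := by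
    simpa using ((hasDerivAt_id (0:ℝ)).smul_const v).const_add x₁
  have hNc : HasDerivAt (fun t : ℝ => N (x₁ + t • v)) a 0 := by
    have := HasFDerivAt.comp_hasDerivAt 0 (by simpa using hN1.hasFDerivAt) hc
    exact this
  have hDc : HasDerivAt (fun t : ℝ => D (x₁ + t • v)) b 0 := by
    have := HasFDerivAt.comp_hasDerivAt 0 (by simpa using hD1.hasFDerivAt) hc
    exact this
  have hφdiff : DifferentiableAt ℝ (fun x => N x / D x) x₁ := by
    have : DifferentiableAt ℝ (fun x => N x * (D x)⁻¹) x₁ :=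
      hN1.mul (hD1.inv (ne_of_gt hD1pos))
    simpa [div_eq_mul_inv] using this
  have hφc : HasDerivAt (fun t : ℝ => N (x₁ + t • v) / D (x₁ + t • v))
      (fderiv ℝ (fun x => N x / D x) x₁ v) 0 := by
    have := HasFDerivAt.comp_hasDerivAt 0 (by simpa using hφdiff.hasFDerivAt) hc
    exact this
  have hφc' : HasDerivAt (fun t : ℝ => N (x₁ + t • v) / D (x₁ + t • v))
      ((a * D (x₁ + (0:ℝ) • v) - N (x₁ + (0:ℝ) • v) * b) / D (x₁ + (0:ℝ) • v) ^ 2) 0 :=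
    hNc.div hDc (by simpa using ne_of_gt hD1pos)
  have heq : fderiv ℝ (fun x => N x / D x) x₁ v
      = (a * D x₁ - N x₁ * b) / D x₁ ^ 2 := by
    have := hφc.unique hφc'
    simpa using this
  rw [heq]
  apply div_pos _ (by positivity)
  -- N x₁ D x₂ < N x₂ D x₁
  have hcross : N x₁ * D x₂ < N x₂ * D x₁ :=
    (div_lt_div_iff₀ hD1pos hD2pos).mp hlt
  have hN1nn := hN0 x₁ hx₁
  nlinarith [mul_le_mul_of_nonneg_left hbineq hN1nn,
    mul_le_mul_of_nonneg_left haineq (le_of_lt hD1pos)]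
end

section
/- For constants a > 0, b > 0 with a/b > 0, the equation ((log2(1+θ) - θ/((1+θ) ln 2)) * b) / (a/((1+θ) ln 2)) = λ in the unknown θ > 0, for λ > 0, has the unique solution θ = exp(1 + W((1/e)*(a*λ/b - 1))) - 1, where W is the principal branch of the Lambert W function, provided a*λ/b ≥ 0. -/
lemma key_eq (a b lam θ : ℝ) (ha : 0 < a) (hb : 0 < b) (hθ : 0 < θ) :
    ((Real.logb 2 (1 + θ) - θ / ((1 + θ) * Real.log 2)) * b) /
        (a / ((1 + θ) * Real.log 2)) = lam ↔
    (1 + θ) * Real.log (1 + θ) - θ = a * lam / b := by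
  have h2 : Real.log 2 ≠ 0 := ne_of_gt (Real.log_pos (by norm_num))
  have hθ1 : (1 : ℝ) + θ ≠ 0 := by linarith
  have hc : Real.log 2 * ((1 + θ) * Real.log 2) ≠ 0 := by positivity
  rw [Real.logb]
  rw [div_eq_iff (by positivity : a / ((1 + θ) * Real.log 2) ≠ 0)]
  rw [eq_div_iff hb.ne']
  constructor
  · intro hh
    field_simp at hh
    refine mul_right_cancel₀ hc ?_
    field_simp
    linear_combination hh
  · intro hh
    field_simp
    linear_combination hh

/-- For a, b > 0 and λ > 0 with a λ / b ≥ 0, the equation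
((log2(1+θ) - θ/((1+θ) ln 2))·b) / (a/((1+θ) ln 2)) = λ in θ > 0 has the
unique solution θ = exp(1 + W((1/e)(a λ/b − 1))) − 1, where W is the
principal branch of the Lambert W function. -/
theorem stmt_8 (W : ℝ → ℝ)
    (hW : ∀ z : ℝ, -(Real.exp 1)⁻¹ ≤ z →
      (-1 ≤ W z ∧ W z * Real.exp (W z) = z))
    (hWuniq : ∀ z x : ℝ, -1 ≤ x → x * Real.exp x = z → W z = x)
    (a b lam : ℝ) (ha : 0 < a) (hb : 0 < b) (hlam : 0 < lam)
    (h : 0 ≤ a * lam / b) :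
    0 < Real.exp (1 + W ((1 / Real.exp 1) * (a * lam / b - 1))) - 1 ∧
    (((Real.logb 2 (1 + (Real.exp (1 + W ((1 / Real.exp 1) * (a * lam / b - 1))) - 1)) -
        (Real.exp (1 + W ((1 / Real.exp 1) * (a * lam / b - 1))) - 1) /
          ((1 + (Real.exp (1 + W ((1 / Real.exp 1) * (a * lam / b - 1))) - 1)) * Real.log 2)) * b) /
      (a / ((1 + (Real.exp (1 + W ((1 / Real.exp 1) * (a * lam / b - 1))) - 1)) * Real.log 2)) = lam) ∧
    (∀ θ : ℝ, 0 < θ →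
      ((Real.logb 2 (1 + θ) - θ / ((1 + θ) * Real.log 2)) * b) /
        (a / ((1 + θ) * Real.log 2)) = lam →
      θ = Real.exp (1 + W ((1 / Real.exp 1) * (a * lam / b - 1))) - 1) := by
  set z : ℝ := (1 / Real.exp 1) * (a * lam / b - 1) with hz_def
  have he : (0:ℝ) < Real.exp 1 := Real.exp_pos 1
  have hab : 0 < a * lam / b := by positivity
  have hzgt : -(Real.exp 1)⁻¹ < z := by
    have hsum : z + (Real.exp 1)⁻¹ = (a * lam / b) / Real.exp 1 := by
      rw [hz_def]; field_simp; ring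
    have : 0 < (a * lam / b) / Real.exp 1 := by positivity
    linarith
  obtain ⟨hW1, hWe⟩ := hW z (le_of_lt hzgt)
  have hWgt : -1 < W z := by
    rcases lt_or_eq_of_le hW1 with h1 | h1
    · exact h1
    · exfalso
      have hz2 : z = -Real.exp (-1) := by rw [← hWe, ← h1]; ring
      rw [Real.exp_neg] at hz2
      linarith
  set w := W z with hw_def
  have hθpos : 0 < Real.exp (1 + w) - 1 := by
    have : Real.exp 0 < Real.exp (1 + w) := Real.exp_lt_exp.mpr (by linarith)
    simpa using this
  have hkey : (1 + (Real.exp (1 + w) - 1)) * Real.log (1 + (Real.exp (1 + w) - 1))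
      - (Real.exp (1 + w) - 1) = a * lam / b := by
    have h1 : (1 : ℝ) + (Real.exp (1 + w) - 1) = Real.exp (1 + w) := by ring
    rw [h1, Real.log_exp]
    have h2 : Real.exp (1 + w) = Real.exp 1 * Real.exp w := by
      rw [← Real.exp_add]
    have h3 : Real.exp 1 * z = a * lam / b - 1 := by
      rw [hz_def]; field_simp
    linear_combination w * h2 + Real.exp 1 * hWe + h3
  refine ⟨hθpos, ?_, ?_⟩
  · exact (key_eq a b lam _ ha hb hθpos).mpr hkey
  · intro θ hθ heq
    have hkey2 : (1 + θ) * Real.log (1 + θ) - θ = a * lam / b :=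
      (key_eq a b lam θ ha hb hθ).mp heq
    rw [eq_div_iff hb.ne'] at hkey2
    have hlog : 0 < Real.log (1 + θ) := Real.log_pos (by linarith)
    set x := Real.log (1 + θ) - 1 with hx_def
    have hx1 : -1 ≤ x := by rw [hx_def]; linarith
    have hex : Real.exp x = (1 + θ) / Real.exp 1 := by
      rw [hx_def, Real.exp_sub, Real.exp_log (by linarith)]
    have hxe : x * Real.exp x = z := by
      rw [hex, hz_def, hx_def]
      field_simp
      linear_combination hkey2
    have hWx := hWuniq z x hx1 hxe
    rw [hw_def, hWx]
    have hexp : Real.exp (1 + x) = 1 + θ := by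
      rw [hx_def, show (1:ℝ) + (Real.log (1+θ) - 1) = Real.log (1+θ) by ring,
        Real.exp_log (by linarith)]
    rw [hexp]; ring
end
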